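/- Assume π ≠ τ. Let F be the set of all k : Fin n satisfying one of: (1) π k = k, τ k ≠ k, a k k ≠ 0 and a (τ⁻¹ k) k = 0; (1') τ k = k, π k ≠ k, a k k ≠ 0 and a (π⁻¹ k) k = 0; (2) π k = k, τ k = k and a k k ≠ 0. Then a linear functional σ on E^n_{π,τ} is a weight function if and only if there exists k ∈ F such that σ(x) = a k k * x k for all x (when exactly one of π, τ fixes k) or σ(x) = 2 * a k k * x k for all x (when both π and τ fix k). In particular, if F has exactly m elements, then E^n_{π,τ} has exactly m weight functions. -/

import Mathlib

/-- The product of the evolution algebra `E_{π,τ}(a)` on a finite type `ι`. -/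
noncomputable def evolMul {ι : Type*} [Fintype ι] [DecidableEq ι]
    (π τ : Equiv.Perm ι) (a : ι → ι → ℝ) (x y : ι → ℝ) : ι → ℝ :=
  fun j => ∑ i, x i * y i *
    ((if π i = j then a i (π i) else 0) + (if τ i = j then a i (τ i) else 0))

/-- A weight function (character) on `E^n_{π,τ}`: a nonzero linear functional that is
multiplicative with respect to the evolution algebra product. -/
def IsWeight {ι : Type*} [Fintype ι] [DecidableEq ι]
    (π τ : Equiv.Perm ι) (a : ι → ι → ℝ) (σ : (ι → ℝ) →ₗ[ℝ] ℝ) : Prop :=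
  σ ≠ 0 ∧ ∀ x y : ι → ℝ, σ (evolMul π τ a x y) = σ x * σ y

section aux
variable {ι : Type*} [Fintype ι] [DecidableEq ι] (π τ : Equiv.Perm ι) (a : ι → ι → ℝ)

lemma sigma_eq (σ : (ι → ℝ) →ₗ[ℝ] ℝ) (x : ι → ℝ) :
    σ x = ∑ i, x i * σ (Pi.single i 1) := by
  conv_lhs => rw [← Finset.univ_sum_single x, map_sum]
  refine Finset.sum_congr rfl fun i _ => ?_
  have : Pi.single i (x i) = x i • (Pi.single i 1 : ι → ℝ) := by
    rw [← Pi.single_smul, smul_eq_mul, mul_one]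
  rw [this, map_smul, smul_eq_mul]

lemma evolMul_single_ne {i j : ι} (h : i ≠ j) :
    evolMul π τ a (Pi.single i 1) (Pi.single j 1) = 0 := by
  funext l
  simp only [evolMul, Pi.zero_apply]
  refine Finset.sum_eq_zero fun m _ => ?_
  rcases eq_or_ne m i with rfl | hm
  · rw [Pi.single_eq_of_ne' h.symm]; ring
  · rw [Pi.single_eq_of_ne hm]; ring

lemma evolMul_single_self (i : ι) :
    evolMul π τ a (Pi.single i 1) (Pi.single i 1)
      = a i (π i) • (Pi.single (π i) 1 : ι → ℝ) + a i (τ i) • (Pi.single (τ i) 1 : ι → ℝ) := by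
  funext j
  simp only [evolMul, Pi.add_apply, Pi.smul_apply, smul_eq_mul]
  rw [Finset.sum_eq_single i]
  · simp [Pi.single_apply, eq_comm, mul_comm]
  · intro m _ hm
    rw [Pi.single_eq_of_ne hm]; ring
  · simp

lemma isWeight_of_aux (σ : (ι → ℝ) →ₗ[ℝ] ℝ) (k : ι) (C : ℝ) (hC : C ≠ 0)
    (hσ : ∀ x, σ x = C * x k)
    (hw : ∀ i, ((if π i = k then a i (π i) else 0) + (if τ i = k then a i (τ i) else 0))
        = if i = k then C else 0) :
    IsWeight π τ a σ := by
  constructor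
  · intro h
    have h0 : σ (Pi.single k 1) = 0 := by rw [h]; rfl
    rw [hσ, Pi.single_eq_same, mul_one] at h0
    exact hC h0
  · intro x y
    rw [hσ, hσ, hσ]
    have hsum : evolMul π τ a x y k = x k * y k * C := by
      simp only [evolMul]
      calc ∑ i, x i * y i *
            ((if π i = k then a i (π i) else 0) + (if τ i = k then a i (τ i) else 0))
          = ∑ i, x i * y i * (if i = k then C else 0) := by
            exact Finset.sum_congr rfl fun i _ => by rw [hw i]
        _ = x k * y k * C := by
            simp [mul_ite, Finset.sum_ite_eq', Finset.mem_univ]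
    rw [hsum]; ring

end aux

/-- characterization of all weight functions of `E^n_{π,τ}` (with `π ≠ τ`)
via the set `F` of indices satisfying conditions (1), (1'), (2); in particular if `F`
has exactly `m` elements, then `E^n_{π,τ}` has exactly `m` weight functions. -/
theorem stmt_1 (n : ℕ) (π τ : Equiv.Perm (Fin n)) (hπτ : π ≠ τ)
    (a : Fin n → Fin n → ℝ) (F : Set (Fin n))
    (hF : F = {k : Fin n |
        (π k = k ∧ τ k ≠ k ∧ a k k ≠ 0 ∧ a (τ⁻¹ k) k = 0) ∨
        (τ k = k ∧ π k ≠ k ∧ a k k ≠ 0 ∧ a (π⁻¹ k) k = 0) ∨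
        (π k = k ∧ τ k = k ∧ a k k ≠ 0)}) :
    (∀ σ : (Fin n → ℝ) →ₗ[ℝ] ℝ,
      IsWeight π τ a σ ↔
        ∃ k ∈ F,
          (((π k = k ∧ τ k ≠ k) ∨ (τ k = k ∧ π k ≠ k)) ∧
              ∀ x, σ x = a k k * x k) ∨
          ((π k = k ∧ τ k = k) ∧ ∀ x, σ x = 2 * a k k * x k)) ∧
    (∀ m : ℕ, F.ncard = m →
      {σ : (Fin n → ℝ) →ₗ[ℝ] ℝ | IsWeight π τ a σ}.ncard = m) := by
  have key : ∀ σ : (Fin n → ℝ) →ₗ[ℝ] ℝ,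
      IsWeight π τ a σ ↔
        ∃ k ∈ F,
          (((π k = k ∧ τ k ≠ k) ∨ (τ k = k ∧ π k ≠ k)) ∧
              ∀ x, σ x = a k k * x k) ∨
          ((π k = k ∧ τ k = k) ∧ ∀ x, σ x = 2 * a k k * x k) := by
    intro σ
    constructor
    · rintro ⟨hne, hmul⟩
      set c : Fin n → ℝ := fun i => σ (Pi.single i 1) with hc
      have hc0 : ∀ i j, i ≠ j → c i * c j = 0 := by
        intro i j hij
        have h := hmul (Pi.single i 1) (Pi.single j 1)
        rw [evolMul_single_ne π τ a hij, map_zero] at h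
        exact h.symm
      have heq : ∀ i, a i (π i) * c (π i) + a i (τ i) * c (τ i) = c i * c i := by
        intro i
        have h := hmul (Pi.single i 1) (Pi.single i 1)
        rw [evolMul_single_self, map_add, map_smul, map_smul, smul_eq_mul, smul_eq_mul] at h
        exact h
      obtain ⟨k, hk⟩ : ∃ k, c k ≠ 0 := by
        by_contra h
        push_neg at h
        exact hne (LinearMap.ext fun x => by
          rw [sigma_eq]
          simp only [LinearMap.zero_apply]
          exact Finset.sum_eq_zero fun i _ => by
            rw [show σ (Pi.single i 1) = c i from rfl, h i, mul_zero])
      have hck : ∀ i, i ≠ k → c i = 0 := by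
        intro i hi
        rcases mul_eq_zero.1 (hc0 i k hi) with h | h
        · exact h
        · exact absurd h hk
      have hσ : ∀ x, σ x = x k * c k := by
        intro x
        rw [sigma_eq σ x, Finset.sum_eq_single k]
        · intro i _ hi
          rw [show σ (Pi.single i 1) = c i from rfl, hck i hi, mul_zero]
        · intro h; exact absurd (Finset.mem_univ k) h
      by_cases hπ : π k = k <;> by_cases hτ : τ k = k
      · -- both fixed: condition (2)
        have h2 : 2 * a k k * c k = c k * c k := by
          have h := heq k; rw [hπ, hτ] at h; linarith
        have hckv : c k = 2 * a k k := (mul_right_cancel₀ hk h2).symm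
        have ha : a k k ≠ 0 := fun h => hk (by rw [hckv, h, mul_zero])
        refine ⟨k, ?_, Or.inr ⟨⟨hπ, hτ⟩, fun x => by rw [hσ, hckv]; ring⟩⟩
        rw [hF]; exact Or.inr (Or.inr ⟨hπ, hτ, ha⟩)
      · -- π fixes, τ doesn't: condition (1)
        have hcτ : c (τ k) = 0 := hck _ hτ
        have h2 : a k k * c k = c k * c k := by
          have h := heq k; rw [hπ, hcτ] at h; linarith
        have hckv : c k = a k k := (mul_right_cancel₀ hk h2).symm
        have ha : a k k ≠ 0 := fun h => hk (by rw [hckv, h])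
        have hik : τ⁻¹ k ≠ k := fun h => hτ (by conv_lhs => rw [← h, Equiv.Perm.inv_def, Equiv.apply_symm_apply])
        have hπik : π (τ⁻¹ k) ≠ k := fun h => hik (π.injective (h.trans hπ.symm))
        have h3 := heq (τ⁻¹ k)
        rw [hck _ hik, hck _ hπik, Equiv.Perm.inv_def, Equiv.apply_symm_apply, mul_zero, zero_add, mul_zero] at h3
        have haτ : a (τ⁻¹ k) k = 0 := by
          rcases mul_eq_zero.1 h3 with h | h
          · exact h
          · exact absurd h hk
        refine ⟨k, ?_, Or.inl ⟨Or.inl ⟨hπ, hτ⟩, fun x => by rw [hσ, hckv]; ring⟩⟩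
        rw [hF]; exact Or.inl ⟨hπ, hτ, ha, haτ⟩
      · -- τ fixes, π doesn't: condition (1')
        have hcπ : c (π k) = 0 := hck _ hπ
        have h2 : a k k * c k = c k * c k := by
          have h := heq k; rw [hτ, hcπ] at h; linarith
        have hckv : c k = a k k := (mul_right_cancel₀ hk h2).symm
        have ha : a k k ≠ 0 := fun h => hk (by rw [hckv, h])
        have hik : π⁻¹ k ≠ k := fun h => hπ (by conv_lhs => rw [← h, Equiv.Perm.inv_def, Equiv.apply_symm_apply])
        have hτik : τ (π⁻¹ k) ≠ k := fun h => hik (τ.injective (h.trans hτ.symm))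
        have h3 := heq (π⁻¹ k)
        rw [hck _ hik, hck _ hτik, Equiv.Perm.inv_def, Equiv.apply_symm_apply, mul_zero, add_zero, mul_zero] at h3
        have haπ : a (π⁻¹ k) k = 0 := by
          rcases mul_eq_zero.1 h3 with h | h
          · exact h
          · exact absurd h hk
        refine ⟨k, ?_, Or.inl ⟨Or.inr ⟨hτ, hπ⟩, fun x => by rw [hσ, hckv]; ring⟩⟩
        rw [hF]; exact Or.inr (Or.inl ⟨hτ, hπ, ha, haπ⟩)
      · -- neither fixes k: contradiction
        exfalso
        have h := heq k
        rw [hck _ hπ, hck _ hτ, mul_zero, mul_zero, add_zero] at h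
        exact hk (mul_self_eq_zero.1 h.symm)
    · rintro ⟨k, hkF, hcase⟩
      rw [hF] at hkF
      rcases hkF with ⟨hπ, hτ, ha, haτ⟩ | ⟨hτ, hπ, ha, haπ⟩ | ⟨hπ, hτ, ha⟩
      · -- condition (1)
        have hσ : ∀ x, σ x = a k k * x k := by
          rcases hcase with ⟨_, h⟩ | ⟨⟨_, hτ'⟩, _⟩
          · exact h
          · exact absurd hτ' hτ
        refine isWeight_of_aux π τ a σ k (a k k) ha hσ fun i => ?_
        rcases eq_or_ne i k with rfl | hik
        · rw [if_pos rfl, if_pos hπ, if_neg hτ, hπ, add_zero]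
        · rw [if_neg hik, if_neg (fun h => hik (π.injective (h.trans hπ.symm)))]
          by_cases hτi : τ i = k
          · have hi : i = τ⁻¹ k := by rw [← hτi, Equiv.Perm.inv_def, Equiv.symm_apply_apply]
            rw [if_pos hτi, hτi, hi, haτ, add_zero]
          · rw [if_neg hτi, add_zero]
      · -- condition (1')
        have hσ : ∀ x, σ x = a k k * x k := by
          rcases hcase with ⟨_, h⟩ | ⟨⟨hπ', _⟩, _⟩
          · exact h
          · exact absurd hπ' hπ
        refine isWeight_of_aux π τ a σ k (a k k) ha hσ fun i => ?_
        rcases eq_or_ne i k with rfl | hik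
        · rw [if_pos rfl, if_neg hπ, if_pos hτ, hτ, zero_add]
        · rw [if_neg hik, if_neg (show ¬ τ i = k from
            fun h => hik (τ.injective (h.trans hτ.symm))), add_zero]
          by_cases hπi : π i = k
          · have hi : i = π⁻¹ k := by rw [← hπi, Equiv.Perm.inv_def, Equiv.symm_apply_apply]
            rw [if_pos hπi, hπi, hi, haπ]
          · rw [if_neg hπi]
      · -- condition (2)
        have hσ : ∀ x, σ x = 2 * a k k * x k := by
          rcases hcase with ⟨⟨_, hτ'⟩ | ⟨_, hπ'⟩, _⟩ | ⟨_, h⟩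
          · exact absurd hτ hτ'
          · exact absurd hπ hπ'
          · exact h
        have h2a : (2 : ℝ) * a k k ≠ 0 := by
          intro h; exact ha (by linarith)
        refine isWeight_of_aux π τ a σ k (2 * a k k) h2a hσ fun i => ?_
        rcases eq_or_ne i k with rfl | hik
        · rw [if_pos rfl, if_pos hπ, if_pos hτ, hπ, hτ]; ring
        · rw [if_neg hik, if_neg (fun h => hik (π.injective (h.trans hπ.symm))),
            if_neg (fun h => hik (τ.injective (h.trans hτ.symm))), add_zero]
  refine ⟨key, ?_⟩
  intro m hm
  set f : Fin n → ((Fin n → ℝ) →ₗ[ℝ] ℝ) := fun k =>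
    ((if π k = k then a k k else 0) + (if τ k = k then a k k else 0)) •
      (LinearMap.proj k : ((Fin n → ℝ) →ₗ[ℝ] ℝ)) with hf
  have hfapp : ∀ k x, f k x =
      ((if π k = k then a k k else 0) + (if τ k = k then a k k else 0)) * x k := by
    intro k x; simp [hf]
  have hCne : ∀ k ∈ F,
      ((if π k = k then a k k else 0) + (if τ k = k then a k k else 0)) ≠ 0 := by
    intro k hk; rw [hF] at hk
    rcases hk with ⟨hπ, hτ, ha, _⟩ | ⟨hτ, hπ, ha, _⟩ | ⟨hπ, hτ, ha⟩
    · rw [if_pos hπ, if_neg hτ, add_zero]; exact ha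
    · rw [if_neg hπ, if_pos hτ, zero_add]; exact ha
    · rw [if_pos hπ, if_pos hτ]; intro h; exact ha (by linarith)
  have hset : {σ : (Fin n → ℝ) →ₗ[ℝ] ℝ | IsWeight π τ a σ} = f '' F := by
    ext σ
    simp only [Set.mem_setOf_eq, key σ, Set.mem_image]
    constructor
    · rintro ⟨k, hk, hcase⟩
      refine ⟨k, hk, ?_⟩
      refine LinearMap.ext fun x => ?_
      rw [hfapp]
      rcases hcase with ⟨⟨hπ, hτ⟩ | ⟨hτ, hπ⟩, h⟩ | ⟨⟨hπ, hτ⟩, h⟩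
      · rw [if_pos hπ, if_neg hτ, add_zero, h x]
      · rw [if_neg hπ, if_pos hτ, zero_add, h x]
      · rw [if_pos hπ, if_pos hτ, h x]; ring
    · rintro ⟨k, hk, rfl⟩
      refine ⟨k, hk, ?_⟩
      rw [hF] at hk
      rcases hk with ⟨hπ, hτ, _, _⟩ | ⟨hτ, hπ, _, _⟩ | ⟨hπ, hτ, _⟩
      · exact Or.inl ⟨Or.inl ⟨hπ, hτ⟩, fun x => by
          rw [hfapp, if_pos hπ, if_neg hτ, add_zero]⟩
      · exact Or.inl ⟨Or.inr ⟨hτ, hπ⟩, fun x => by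
          rw [hfapp, if_neg hπ, if_pos hτ, zero_add]⟩
      · exact Or.inr ⟨⟨hπ, hτ⟩, fun x => by
          rw [hfapp, if_pos hπ, if_pos hτ]; ring⟩
  have hinj : Set.InjOn f F := by
    intro k hk k' hk' hkk'
    by_contra hne
    have h1 := LinearMap.congr_fun hkk' (Pi.single k 1)
    rw [hfapp, hfapp, Pi.single_eq_same, mul_one, Pi.single_eq_of_ne (Ne.symm hne), mul_zero] at h1
    exact hCne k hk h1
  rw [hset, Set.ncard_image_of_injOn hinj, hm]
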